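/- For every round r, the total system energy is conserved: Σ_{i ∈ V} e_i^r = n - 1. -/

import Mathlib

/-- For every round `r`, the total system energy is conserved:
`Σ_{i ∈ V} e_i^r = n - 1`. -/
theorem system_energy_conserved
    {V : Type*} [Fintype V] [DecidableEq V]
    (n : ℕ) (hn : 2 ≤ n) (hcard : Fintype.card V = n)
    (ℓ : V) (G : ℕ → SimpleGraph V) [∀ r, DecidableRel (G r).Adj]
    (Δ : ℕ) (hΔ : 1 ≤ Δ)
    (hdeg : ∀ r v, (G r).degree v ≤ Δ)
    (e : ℕ → V → ℝ)
    (h0ℓ : e 0 ℓ = 0)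
    (h0 : ∀ i, i ≠ ℓ → e 0 i = 1)
    (hstep : ∀ r i, i ≠ ℓ →
      e (r + 1) i = e r i * (1 - ((G r).degree i : ℝ) / (2 * Δ))
        + (1 / (2 * Δ)) * ∑ j ∈ ((G r).neighborFinset i).filter (fun j => j ≠ ℓ), e r j)
    (hstepℓ : ∀ r,
      e (r + 1) ℓ = e r ℓ + (1 / (2 * Δ)) * ∑ j ∈ (G r).neighborFinset ℓ, e r j) :
    ∀ r, ∑ i, e r i = (n : ℝ) - 1 := by
  have hsplit : ∀ (f : V → ℝ), ∑ i, f i = ∑ i ∈ Finset.univ.erase ℓ, f i + f ℓ :=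
    fun f => (Finset.sum_erase_add _ _ (Finset.mem_univ ℓ)).symm
  intro r
  induction r with
  | zero =>
      rw [hsplit, h0ℓ, add_zero,
        Finset.sum_congr rfl (fun i hi => h0 i (Finset.ne_of_mem_erase hi))]
      rw [Finset.sum_const, Finset.card_erase_of_mem (Finset.mem_univ ℓ),
        Finset.card_univ, hcard]
      have : (1:ℕ) ≤ n := by omega
      rw [nsmul_eq_mul, mul_one, Nat.cast_sub this]
      push_cast
      ring
  | succ r ih =>
      set T := Finset.univ.erase ℓ with hT
      -- key double counting identity
      have key : (∑ j ∈ (G r).neighborFinset ℓ, e r j)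
          + ∑ i ∈ T, ∑ j ∈ ((G r).neighborFinset i).filter (fun j => j ≠ ℓ), e r j
          = ∑ i ∈ T, e r i * ((G r).degree i : ℝ) := by
        have hnb : ∀ v : V, (G r).neighborFinset v = Finset.univ.filter ((G r).Adj v) := by
          intro v; ext j; simp [SimpleGraph.mem_neighborFinset]
        have hdegsum : ∀ j : V, e r j * ((G r).degree j : ℝ)
            = ∑ i ∈ Finset.univ.filter ((G r).Adj j), e r j := by
          intro j
          rw [Finset.sum_const, SimpleGraph.degree, hnb, nsmul_eq_mul, mul_comm]
        -- rewrite each filtered neighbor sum as a sum over T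
        have hB : ∀ i : V, ∑ j ∈ ((G r).neighborFinset i).filter (fun j => j ≠ ℓ), e r j
            = ∑ j ∈ T, if (G r).Adj i j then e r j else 0 := by
          intro i
          rw [hnb, Finset.filter_filter, Finset.sum_filter]
          rw [hT, ← Finset.filter_ne' Finset.univ ℓ, Finset.sum_filter]
          apply Finset.sum_congr rfl
          intro j _
          by_cases h1 : (G r).Adj i j <;> by_cases h2 : j ≠ ℓ <;> simp [h1, h2]
        have hA : ∑ j ∈ (G r).neighborFinset ℓ, e r j
            = ∑ j ∈ T, if (G r).Adj j ℓ then e r j else 0 := by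
          rw [hnb, Finset.sum_filter]
          rw [hT, ← Finset.filter_ne' Finset.univ ℓ, Finset.sum_filter]
          apply Finset.sum_congr rfl
          intro j _
          by_cases h1 : (G r).Adj ℓ j
          · have hj : j ≠ ℓ := fun h => (G r).ne_of_adj h1 h.symm
            simp [h1, hj, (G r).adj_symm h1]
          · have h2 : ¬ (G r).Adj j ℓ := fun h => h1 ((G r).adj_symm h)
            simp [h1, h2]
        rw [hA, Finset.sum_congr rfl (fun i _ => hB i)]
        rw [Finset.sum_comm (s := T) (t := T)]
        rw [← Finset.sum_add_distrib]
        apply Finset.sum_congr rfl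
        intro j hj
        have : ∀ i ∈ T, (if (G r).Adj i j then e r j else 0)
            = if (G r).Adj j i then e r j else 0 := by
          intro i _; simp only [(G r).adj_comm i j]
        rw [Finset.sum_congr rfl this, hdegsum j, Finset.sum_filter]
        rw [hsplit (fun i => if (G r).Adj j i then e r j else 0)]
        ring
      -- now the algebra
      have ih' : ∑ i ∈ T, e r i + e r ℓ = (n : ℝ) - 1 := by
        rw [← hsplit]; exact ih
      rw [hsplit, hstepℓ r,
        Finset.sum_congr rfl (fun i hi => hstep r i (Finset.ne_of_mem_erase hi)),
        Finset.sum_add_distrib]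
      have hD : (2 * (Δ:ℝ)) ≠ 0 := by positivity
      have h1 : ∑ i ∈ T, e r i * (1 - ((G r).degree i : ℝ) / (2 * Δ))
          = ∑ i ∈ T, e r i - (1 / (2 * (Δ:ℝ))) * ∑ i ∈ T, e r i * ((G r).degree i : ℝ) := by
        rw [Finset.mul_sum, ← Finset.sum_sub_distrib]
        apply Finset.sum_congr rfl
        intro i _
        field_simp
      have h2 : ∑ i ∈ T, (1 / (2 * (Δ:ℝ))) * ∑ j ∈ ((G r).neighborFinset i).filter (fun j => j ≠ ℓ), e r j
          = (1 / (2 * (Δ:ℝ))) * ∑ i ∈ T, ∑ j ∈ ((G r).neighborFinset i).filter (fun j => j ≠ ℓ), e r j :=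
        (Finset.mul_sum _ _ _).symm
      rw [h1, h2]
      linear_combination ih' + (1 / (2 * (Δ:ℝ))) * key
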